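/- There exist a finite instance set X, a finite hypothesis class H of functions X → Bool, and an initial hypothesis h0 ∈ H such that Σ_const-TD_{X,H,h0} = 3, Σ_global-TD_{X,H,h0} = 2, and Σ_gvs-TD_{X,H,h0} = 1 (equivalently, TD(H) = 3, RTD(H) = 2, and NCTD(H) = 1). -/
import Mathlib


open scoped Classical

/-- A preference function `σ(h'; H', h)`: `h'` is a candidate hypothesis, `H'` the current
version space, `h` the learner's current hypothesis. -/
abbrev Pref (X : Type) : Type := (X → Bool) → Finset (X → Bool) → (X → Bool) → ℝ

variable {X : Type}

/-- `h` is consistent with the labeled examples in `S`. -/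
def ConsistentWith (h : X → Bool) (S : Finset (X × Bool)) : Prop := ∀ z ∈ S, h z.1 = z.2

/-- Version space of `H'` induced by the labeled examples `S`. -/
noncomputable def verSpace (H' : Finset (X → Bool)) (S : Finset (X × Bool)) :
    Finset (X → Bool) :=
  H'.filter fun h => ∀ z ∈ S, h z.1 = z.2

/-- The set of hypotheses in `H'` most preferred by `σ` given current hypothesis `h`. -/
noncomputable def argminSet (σ : Pref X) (H' : Finset (X → Bool)) (h : X → Bool) :
    Finset (X → Bool) :=
  H'.filter fun h' => ∀ h'' ∈ H', σ h' H' h ≤ σ h'' H' h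

/-- `C_σ(H', h, z)`: the candidate hypotheses most preferred by the learner after
receiving the labeled example `z`. -/
noncomputable def Cand (σ : Pref X) (H' : Finset (X → Bool)) (h : X → Bool) (z : X × Bool) :
    Finset (X → Bool) :=
  argminSet σ (verSpace H' {z}) h

/-- `Dle σ n H' h h*` means the worst-case teaching cost `D_σ(H', h, h*) ≤ n`. -/
def Dle (σ : Pref X) : ℕ → Finset (X → Bool) → (X → Bool) → (X → Bool) → Prop
  | 0, _, _, _ => False
  | n + 1, H', h, hstar =>
      (∃ z : X × Bool, hstar z.1 = z.2 ∧ Cand σ H' h z = {hstar}) ∨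
      (∃ z : X × Bool, hstar z.1 = z.2 ∧
        ∀ h'' ∈ Cand σ H' h z, Dle σ n (verSpace H' {z}) h'' hstar)

/-- The worst-case teaching cost `D_σ(H', h, h*)` (∞ when teaching is impossible). -/
noncomputable def Dval (σ : Pref X) (H' : Finset (X → Bool)) (h hstar : X → Bool) : ℕ∞ :=
  sInf {n : ℕ∞ | ∃ m : ℕ, n = (m : ℕ∞) ∧ Dle σ m H' h hstar}

/-- Teaching dimension `TD_{X,H,h0}(σ) = max_{h* ∈ H} D_σ(H, h0, h*)`. -/
noncomputable def TDpref (Hc : Finset (X → Bool)) (h0 : X → Bool) (σ : Pref X) : ℕ∞ :=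
  ⨆ hstar ∈ Hc, Dval σ Hc h0 hstar

/-- Teaching dimension of a family of preference functions: `Σ-TD = min_{σ ∈ Σ} TD(σ)`. -/
noncomputable def famTD (Hc : Finset (X → Bool)) (h0 : X → Bool) (F : Set (Pref X)) : ℕ∞ :=
  ⨅ σ ∈ F, TDpref Hc h0 σ

/-- A preference function is collusion-free. -/
def CollusionFree (Hc : Finset (X → Bool)) (σ : Pref X) : Prop :=
  ∀ h ∈ Hc, ∀ H' ⊆ Hc, ∀ hhat : X → Bool,
    argminSet σ H' h = {hhat} →
    ∀ S : Finset (X × Bool), ConsistentWith hhat S →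
      argminSet σ (verSpace H' S) hhat = {hhat}

/-- `Σ_const`: collusion-free constant preference functions. -/
def SigmaConst (Hc : Finset (X → Bool)) : Set (Pref X) :=
  {σ | CollusionFree Hc σ ∧ ∃ c : ℝ, ∀ h' H' h, σ h' H' h = c}

/-- `Σ_global`: collusion-free preference functions of the form `g(h')`. -/
def SigmaGlobal (Hc : Finset (X → Bool)) : Set (Pref X) :=
  {σ | CollusionFree Hc σ ∧ ∃ g : (X → Bool) → ℝ, ∀ h' H' h, σ h' H' h = g h'}

/-- `Σ_gvs`: collusion-free preference functions of the form `g(h', H')`. -/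
def SigmaGVS (Hc : Finset (X → Bool)) : Set (Pref X) :=
  {σ | CollusionFree Hc σ ∧
    ∃ g : (X → Bool) → Finset (X → Bool) → ℝ, ∀ h' H' h, σ h' H' h = g h' H'}

/-- `Σ_local`: collusion-free preference functions of the form `g(h', h)`. -/
def SigmaLocal (Hc : Finset (X → Bool)) : Set (Pref X) :=
  {σ | CollusionFree Hc σ ∧ ∃ g : (X → Bool) → (X → Bool) → ℝ, ∀ h' H' h, σ h' H' h = g h' h}

/-- `Σ_lvs`: all collusion-free preference functions. -/
def SigmaLVS (Hc : Finset (X → Bool)) : Set (Pref X) := {σ | CollusionFree Hc σ}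

/-- `T` is a teaching set for `h` w.r.t. the subclass `Hc`. -/
def IsTeachingSet (Hc : Finset (X → Bool)) (h : X → Bool) (T : Finset X) : Prop :=
  ∀ h' ∈ Hc, (∀ x ∈ T, h' x = h x) → h' = h

/-- Size of the minimum teaching set of `h` w.r.t. `Hc`. -/
noncomputable def minTSsize (Hc : Finset (X → Bool)) (h : X → Bool) : ℕ :=
  sInf {k | ∃ T : Finset X, T.card = k ∧ IsTeachingSet Hc h T}

/-- The classical (worst-case) teaching dimension `TD(H)`. -/
noncomputable def TDclassic (Hc : Finset (X → Bool)) : ℕ :=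
  Hc.sup (minTSsize Hc)

/-- Witness for `RTD(H) ≤ k`: an ordering of `H` where each hypothesis has a teaching
set of size at most `k` w.r.t. the remaining hypotheses. -/
def RTDwitness (Hc : Finset (X → Bool)) (k : ℕ) : Prop :=
  ∃ L : List (X → Bool), L.Nodup ∧ L.toFinset = Hc ∧
    ∀ (i : ℕ) (hi : i < L.length), ∃ T : Finset X, T.card ≤ k ∧
      IsTeachingSet (L.drop i).toFinset (L.get ⟨i, hi⟩) T

/-- The recursive teaching dimension `RTD(H)`. -/
noncomputable def RTD (Hc : Finset (X → Bool)) : ℕ := sInf {k | RTDwitness Hc k}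

/-- A teacher mapping is non-clashing on `Hc`. -/
def NonClashing (Hc : Finset (X → Bool)) (T : (X → Bool) → Finset X) : Prop :=
  ∀ h ∈ Hc, ∀ h' ∈ Hc, h ≠ h' →
    ¬ ((∀ x ∈ T h, h' x = h x) ∧ (∀ x ∈ T h', h x = h' x))

/-- The non-clashing teaching dimension `NCTD(H)`. -/
noncomputable def NCTD (Hc : Finset (X → Bool)) : ℕ :=
  sInf {k | ∃ T : (X → Bool) → Finset X, NonClashing Hc T ∧ ∀ h ∈ Hc, (T h).card ≤ k}

/-- `Hc` shatters the set of instances `X'`. -/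
def Shatters (Hc : Finset (X → Bool)) (X' : Finset X) : Prop :=
  ∀ b : X → Bool, ∃ h ∈ Hc, ∀ x ∈ X', h x = b x

/-- The VC dimension `VCD(H, X)`. -/
noncomputable def VCD (Hc : Finset (X → Bool)) : ℕ :=
  sSup {k | ∃ X' : Finset X, X'.card = k ∧ Shatters Hc X'}

/-! ### Auxiliary lemmas -/

section Aux

theorem mem_verSpace {H' : Finset (X → Bool)} {S : Finset (X × Bool)} {h : X → Bool} :
    h ∈ verSpace H' S ↔ h ∈ H' ∧ ∀ z ∈ S, h z.1 = z.2 := Finset.mem_filter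

theorem mem_argminSet {σ : Pref X} {H' : Finset (X → Bool)} {h h' : X → Bool} :
    h' ∈ argminSet σ H' h ↔ h' ∈ H' ∧ ∀ h'' ∈ H', σ h' H' h ≤ σ h'' H' h := Finset.mem_filter

theorem argminSet_nonempty (σ : Pref X) {H' : Finset (X → Bool)} (hne : H'.Nonempty)
    (h : X → Bool) : (argminSet σ H' h).Nonempty := by
  obtain ⟨m, hm, hmin⟩ := H'.exists_min_image (fun h' => σ h' H' h) hne
  exact ⟨m, mem_argminSet.2 ⟨hm, hmin⟩⟩

theorem argminSet_eq_singleton {σ : Pref X} {V : Finset (X → Bool)} {h hstar : X → Bool}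
    (hmem : hstar ∈ V) (hlt : ∀ h' ∈ V, h' ≠ hstar → σ hstar V h < σ h' V h) :
    argminSet σ V h = {hstar} := by
  ext h'
  simp only [Finset.mem_singleton, mem_argminSet]
  constructor
  · rintro ⟨hV, hmin⟩
    by_contra hne
    exact absurd (hmin hstar hmem) (not_le.2 (hlt h' hV hne))
  · intro he
    constructor
    · rw [he]; exact hmem
    · intro h'' hh''
      rcases eq_or_ne h'' hstar with he2 | hne
      · rw [he, he2]
      · rw [he]; exact (hlt h'' hh'' hne).le

theorem argminSet_const {c : ℝ} {V : Finset (X → Bool)} {h : X → Bool} :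
    argminSet (fun _ _ _ => c) V h = V := by
  ext h'; simp [argminSet]

theorem Dle_succ_iff {σ : Pref X} {n : ℕ} {H' : Finset (X → Bool)} {h hstar : X → Bool} :
    Dle σ (n+1) H' h hstar ↔
      (∃ z : X × Bool, hstar z.1 = z.2 ∧ Cand σ H' h z = {hstar}) ∨
      (∃ z : X × Bool, hstar z.1 = z.2 ∧
        ∀ h'' ∈ Cand σ H' h z, Dle σ n (verSpace H' {z}) h'' hstar) := Iff.rfl

theorem Dle_zero {σ : Pref X} {H' : Finset (X → Bool)} {h hstar : X → Bool} :
    ¬ Dle σ 0 H' h hstar := fun h => h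

theorem Dle_mono {σ : Pref X} : ∀ {n : ℕ} {H' : Finset (X → Bool)} {h hstar : X → Bool},
    Dle σ n H' h hstar → Dle σ (n+1) H' h hstar
  | 0, _, _, _, h => h.elim
  | n+1, H', h, hstar, hd => by
    rcases hd with ⟨z, hz, hC⟩ | ⟨z, hz, hrec⟩
    · exact Or.inl ⟨z, hz, hC⟩
    · exact Or.inr ⟨z, hz, fun h'' hm => Dle_mono (hrec h'' hm)⟩

theorem Dle_le_mono {σ : Pref X} {m n : ℕ} (hmn : m ≤ n) {H' : Finset (X → Bool)}
    {h hstar : X → Bool} (hd : Dle σ m H' h hstar) : Dle σ n H' h hstar := by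
  induction hmn with
  | refl => exact hd
  | step _ ih => exact Dle_mono ih

theorem Dval_le {σ : Pref X} {m : ℕ} {H' : Finset (X → Bool)} {h hstar : X → Bool}
    (hd : Dle σ m H' h hstar) : Dval σ H' h hstar ≤ (m : ℕ∞) :=
  sInf_le ⟨m, rfl, hd⟩

theorem Dval_ge {σ : Pref X} {m : ℕ} {H' : Finset (X → Bool)} {h hstar : X → Bool}
    (hd : ¬ Dle σ m H' h hstar) : ((m+1 : ℕ) : ℕ∞) ≤ Dval σ H' h hstar := by
  refine le_sInf ?_
  rintro n ⟨k, rfl, hk⟩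
  have h2 : m + 1 ≤ k := by
    by_contra hcon
    exact hd (Dle_le_mono (by omega) hk)
  exact_mod_cast h2

theorem TDpref_le {Hc : Finset (X → Bool)} {h0 : X → Bool} {σ : Pref X} {m : ℕ}
    (h : ∀ hstar ∈ Hc, Dle σ m Hc h0 hstar) : TDpref Hc h0 σ ≤ (m : ℕ∞) :=
  iSup₂_le fun hstar hmem => Dval_le (h hstar hmem)

theorem TDpref_ge {Hc : Finset (X → Bool)} {h0 : X → Bool} {σ : Pref X} {m : ℕ}
    {hstar : X → Bool} (hmem : hstar ∈ Hc) (h : ¬ Dle σ m Hc h0 hstar) :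
    ((m+1 : ℕ) : ℕ∞) ≤ TDpref Hc h0 σ :=
  le_trans (Dval_ge h) (le_iSup₂ (f := fun hs _ => Dval σ Hc h0 hs) hstar hmem)

theorem famTD_le {Hc : Finset (X → Bool)} {h0 : X → Bool} {F : Set (Pref X)} {σ : Pref X}
    (hσ : σ ∈ F) {m : ℕ∞} (h : TDpref Hc h0 σ ≤ m) : famTD Hc h0 F ≤ m :=
  le_trans (iInf₂_le σ hσ) h

theorem le_famTD {Hc : Finset (X → Bool)} {h0 : X → Bool} {F : Set (Pref X)} {m : ℕ∞}
    (h : ∀ σ ∈ F, m ≤ TDpref Hc h0 σ) : m ≤ famTD Hc h0 F := le_iInf₂ h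

/-- Any "global" preference function is collusion-free. -/
theorem global_cf (Hc : Finset (X → Bool)) (g : (X → Bool) → ℝ) :
    CollusionFree Hc (fun h' _ _ => g h') := by
  intro h _ H' hsub hhat hargmin S hcons
  have hself : hhat ∈ argminSet (fun h' _ _ => g h') H' h := by
    rw [hargmin]; exact Finset.mem_singleton_self hhat
  rw [mem_argminSet] at hself
  obtain ⟨hhatH, hhatmin⟩ := hself
  have hhatV : hhat ∈ verSpace H' S := mem_verSpace.2 ⟨hhatH, hcons⟩
  ext h'
  simp only [Finset.mem_singleton, mem_argminSet]
  constructor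
  · rintro ⟨hV, hmin⟩
    have hV' : h' ∈ H' := (mem_verSpace.1 hV).1
    have h1 : g h' ≤ g hhat := hmin hhat hhatV
    have h2 : h' ∈ argminSet (fun h' _ _ => g h') H' h :=
      mem_argminSet.2 ⟨hV', fun h'' hm => le_trans h1 (hhatmin h'' hm)⟩
    rw [hargmin] at h2
    exact Finset.mem_singleton.1 h2
  · rintro rfl
    exact ⟨hhatV, fun h'' hm => hhatmin h'' (mem_verSpace.1 hm).1⟩

/-- Key argmin computation for the version-space-dependent preference induced by a
non-clashing teacher with singleton teaching sets. -/
theorem gvs_key (Hc : Finset (X → Bool)) (t : (X → Bool) → X)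
    (hnc : ∀ h ∈ Hc, ∀ h' ∈ Hc, h ≠ h' → ¬ (h' (t h) = h (t h) ∧ h (t h') = h' (t h')))
    (V : Finset (X → Bool)) (hsub : V ⊆ Hc) (hc : X → Bool) (hstar : X → Bool)
    (hsmem : hstar ∈ V) (hP : ∀ h'' ∈ V, h'' (t hstar) = hstar (t hstar)) :
    argminSet (fun h' H'' _ => if ∀ h'' ∈ H'', h'' (t h') = h' (t h') then (0:ℝ) else 1) V hc
      = {hstar} := by
  ext h'
  simp only [Finset.mem_singleton, mem_argminSet]
  constructor
  · rintro ⟨hV, hmin⟩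
    have hle := hmin hstar hsmem
    rw [if_pos hP] at hle
    have hP' : ∀ h'' ∈ V, h'' (t h') = h' (t h') := by
      by_contra hcon
      rw [if_neg hcon] at hle
      linarith
    by_contra hne
    exact hnc hstar (hsub hsmem) h' (hsub hV) (Ne.symm hne) ⟨hP h' hV, hP' hstar hsmem⟩
  · rintro rfl
    refine ⟨hsmem, fun h'' hm => ?_⟩
    rw [if_pos hP]
    split <;> norm_num

theorem gvs_upper (Hc : Finset (X → Bool)) (h0 : X → Bool) (t : (X → Bool) → X)
    (hnc : ∀ h ∈ Hc, ∀ h' ∈ Hc, h ≠ h' → ¬ (h' (t h) = h (t h) ∧ h (t h') = h' (t h'))) :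
    ∃ σ ∈ SigmaGVS Hc, ∀ hstar ∈ Hc, Dle σ 1 Hc h0 hstar := by
  refine ⟨fun h' H'' _ => if ∀ h'' ∈ H'', h'' (t h') = h' (t h') then (0:ℝ) else 1,
    ⟨?_, ⟨fun h' H'' => if ∀ h'' ∈ H'', h'' (t h') = h' (t h') then (0:ℝ) else 1,
      fun _ _ _ => rfl⟩⟩, ?_⟩
  · -- collusion-free
    intro h hmem H' hsub hhat hargmin S hcons
    have hself : hhat ∈ argminSet
        (fun h' H'' _ => if ∀ h'' ∈ H'', h'' (t h') = h' (t h') then (0:ℝ) else 1) H' h := by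
      rw [hargmin]; exact Finset.mem_singleton_self hhat
    rw [mem_argminSet] at hself
    obtain ⟨hhatH, hhatmin⟩ := hself
    have hVsub : verSpace H' S ⊆ H' := Finset.filter_subset _ _
    have hhatV : hhat ∈ verSpace H' S := mem_verSpace.2 ⟨hhatH, hcons⟩
    by_cases hP : ∀ h'' ∈ H', h'' (t hhat) = hhat (t hhat)
    · exact gvs_key Hc t hnc (verSpace H' S) (hVsub.trans hsub) hhat hhat hhatV
        (fun h'' hm => hP h'' (hVsub hm))
    · -- H' must be {hhat}
      have hH' : H' = {hhat} := by
        apply Finset.Subset.antisymm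
        · intro h'' hm
          rw [← hargmin, mem_argminSet]
          refine ⟨hm, fun h3 h3m => ?_⟩
          have hle := hhatmin h3 h3m
          rw [if_neg hP] at hle
          have hcond : ¬ ∀ hh ∈ H', hh (t h3) = h3 (t h3) := by
            intro hcond
            rw [if_pos hcond] at hle
            linarith
          rw [if_neg hcond]
          split <;> norm_num
        · intro h'' hm
          rw [Finset.mem_singleton] at hm
          subst hm
          exact hhatH
      have hVS : verSpace H' S = {hhat} := by
        rw [hH']
        ext h''
        rw [mem_verSpace]
        simp only [Finset.mem_singleton]
        constructor
        · rintro ⟨rfl, _⟩; rfl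
        · rintro rfl; exact ⟨rfl, hcons⟩
      rw [hVS]
      apply gvs_key Hc t hnc {hhat} (by rw [← hH']; exact hsub) hhat hhat
        (Finset.mem_singleton_self _)
      intro h'' hm
      rw [Finset.mem_singleton] at hm
      subst hm
      rfl
  · -- teaching with one example
    intro hstar hmem
    refine Or.inl ⟨(t hstar, hstar (t hstar)), rfl, ?_⟩
    apply gvs_key Hc t hnc _ (Finset.filter_subset _ _) h0 hstar
    · refine mem_verSpace.2 ⟨hmem, ?_⟩
      intro z hz
      rw [Finset.mem_singleton] at hz
      subst hz
      rfl
    · intro h'' hm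
      exact (mem_verSpace.1 hm).2 _ (Finset.mem_singleton_self _)

theorem global_upper (Hc : Finset (X → Bool)) (h0 : X → Bool) (rk : (X → Bool) → ℕ)
    (hord : ∀ hs ∈ Hc, ∃ x1 x2 : X, ∀ h' ∈ Hc,
      h' x1 = hs x1 → h' x2 = hs x2 → rk h' ≤ rk hs → h' = hs) :
    ∃ σ ∈ SigmaGlobal Hc, ∀ hstar ∈ Hc, Dle σ 2 Hc h0 hstar := by
  refine ⟨fun h' _ _ => (rk h' : ℝ),
    ⟨global_cf Hc (fun h' => (rk h' : ℝ)), ⟨fun h' => (rk h' : ℝ), fun _ _ _ => rfl⟩⟩, ?_⟩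
  intro hstar hmem
  obtain ⟨x1, x2, hx⟩ := hord hstar hmem
  refine Or.inr ⟨(x1, hstar x1), rfl, fun h'' _ => ?_⟩
  refine Or.inl ⟨(x2, hstar x2), rfl, ?_⟩
  unfold Cand
  apply argminSet_eq_singleton
  · refine mem_verSpace.2 ⟨mem_verSpace.2 ⟨hmem, ?_⟩, ?_⟩ <;>
      · intro z hz
        rw [Finset.mem_singleton] at hz
        subst hz
        rfl
  · intro h' hV hne
    have h1 := mem_verSpace.1 hV
    have h2 := mem_verSpace.1 h1.1
    have hx1 : h' x1 = hstar x1 := h2.2 _ (Finset.mem_singleton_self _)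
    have hx2 : h' x2 = hstar x2 := h1.2 _ (Finset.mem_singleton_self _)
    have hnle : ¬ rk h' ≤ rk hstar := fun hle => hne (hx h' h2.1 hx1 hx2 hle)
    exact_mod_cast Nat.lt_of_not_le hnle

theorem const_upper (Hc : Finset (X → Bool)) (h0 : X → Bool)
    (hfull : ∀ hs ∈ Hc, ∃ x1 x2 x3 : X, ∀ h' ∈ Hc,
      h' x1 = hs x1 → h' x2 = hs x2 → h' x3 = hs x3 → h' = hs) :
    ∃ σ ∈ SigmaConst Hc, ∀ hstar ∈ Hc, Dle σ 3 Hc h0 hstar := by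
  refine ⟨fun _ _ _ => (0:ℝ), ⟨global_cf Hc (fun _ => (0:ℝ)), ⟨0, fun _ _ _ => rfl⟩⟩, ?_⟩
  intro hstar hmem
  obtain ⟨x1, x2, x3, hx⟩ := hfull hstar hmem
  refine Or.inr ⟨(x1, hstar x1), rfl, fun h1 _ => ?_⟩
  refine Or.inr ⟨(x2, hstar x2), rfl, fun h2 _ => ?_⟩
  refine Or.inl ⟨(x3, hstar x3), rfl, ?_⟩
  unfold Cand
  rw [argminSet_const]
  ext h'
  simp only [Finset.mem_singleton]
  constructor
  · intro hm
    have hm1 := mem_verSpace.1 hm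
    have hm2 := mem_verSpace.1 hm1.1
    have hm3 := mem_verSpace.1 hm2.1
    exact hx h' hm3.1 (hm3.2 _ (Finset.mem_singleton_self _))
      (hm2.2 _ (Finset.mem_singleton_self _)) (hm1.2 _ (Finset.mem_singleton_self _))
  · rintro rfl
    refine mem_verSpace.2 ⟨mem_verSpace.2 ⟨mem_verSpace.2 ⟨hmem, ?_⟩, ?_⟩, ?_⟩ <;>
      · intro z hz
        rw [Finset.mem_singleton] at hz
        subst hz
        rfl

theorem const_lower (Hc : Finset (X → Bool)) (h0 hstar : X → Bool) (hmem : hstar ∈ Hc)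
    (hlow : ∀ x1 x2 : X, ∃ h' ∈ Hc, h' x1 = hstar x1 ∧ h' x2 = hstar x2 ∧ h' ≠ hstar)
    {σ : Pref X} (hσ : σ ∈ SigmaConst Hc) : ¬ Dle σ 2 Hc h0 hstar := by
  obtain ⟨-, c, hc⟩ := hσ
  have hconst : σ = fun _ _ _ => c := by funext a b d; exact hc a b d
  subst hconst
  intro hd
  rcases hd with ⟨z1, hz1, hC⟩ | ⟨z1, hz1, hrec⟩
  · obtain ⟨h', hmem', ha1, -, hne⟩ := hlow z1.1 z1.1
    have hm : h' ∈ Cand (fun _ _ _ => c) Hc h0 z1 := by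
      unfold Cand
      rw [argminSet_const]
      refine mem_verSpace.2 ⟨hmem', ?_⟩
      intro z hz
      rw [Finset.mem_singleton] at hz
      subst hz
      rw [ha1]
      exact hz1
    rw [hC] at hm
    exact hne (Finset.mem_singleton.1 hm)
  · have hsmem : hstar ∈ Cand (fun _ _ _ => c) Hc h0 z1 := by
      unfold Cand
      rw [argminSet_const]
      refine mem_verSpace.2 ⟨hmem, ?_⟩
      intro z hz
      rw [Finset.mem_singleton] at hz
      subst hz
      exact hz1
    rcases hrec hstar hsmem with ⟨z2, hz2, hC⟩ | ⟨z2, hz2, hrec2⟩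
    · obtain ⟨h', hmem', ha1, ha2, hne⟩ := hlow z1.1 z2.1
      have hm : h' ∈ Cand (fun _ _ _ => c) (verSpace Hc {z1}) hstar z2 := by
        unfold Cand
        rw [argminSet_const]
        refine mem_verSpace.2 ⟨mem_verSpace.2 ⟨hmem', ?_⟩, ?_⟩
        · intro z hz
          rw [Finset.mem_singleton] at hz
          subst hz
          rw [ha1]
          exact hz1
        · intro z hz
          rw [Finset.mem_singleton] at hz
          subst hz
          rw [ha2]
          exact hz2
      rw [hC] at hm
      exact hne (Finset.mem_singleton.1 hm)
    · apply hrec2 hstar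
      unfold Cand
      rw [argminSet_const]
      refine mem_verSpace.2 ⟨mem_verSpace.2 ⟨hmem, ?_⟩, ?_⟩
      · intro z hz
        rw [Finset.mem_singleton] at hz
        subst hz
        exact hz1
      · intro z hz
        rw [Finset.mem_singleton] at hz
        subst hz
        exact hz2

theorem global_lower (Hc : Finset (X → Bool)) (h0 : X → Bool) (B : Finset (X → Bool))
    (hBsub : B ⊆ Hc) (hBne : B.Nonempty)
    (hcore : ∀ h ∈ B, ∀ x : X, ∃ h' ∈ B, h' x = h x ∧ h' ≠ h)
    {σ : Pref X} (hσ : σ ∈ SigmaGlobal Hc) : ∃ hstar ∈ Hc, ¬ Dle σ 1 Hc h0 hstar := by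
  obtain ⟨-, g, hg⟩ := hσ
  have hσeq : σ = fun h' _ _ => g h' := by funext a b d; exact hg a b d
  subst hσeq
  obtain ⟨hstar, hsB, hmax⟩ := B.exists_max_image g hBne
  refine ⟨hstar, hBsub hsB, fun hd => ?_⟩
  rcases hd with ⟨z, hz, hC⟩ | ⟨z, hz, hrec⟩
  · obtain ⟨h', hB', ha, hne⟩ := hcore hstar hsB z.1
    have hsC : hstar ∈ Cand (fun h' _ _ => g h') Hc h0 z := by
      rw [hC]; exact Finset.mem_singleton_self _
    unfold Cand at hsC
    have hsmin := (mem_argminSet.1 hsC).2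
    have hm : h' ∈ Cand (fun h' _ _ => g h') Hc h0 z := by
      unfold Cand
      refine mem_argminSet.2 ⟨?_, fun h'' hmm => le_trans (hmax h' hB') (hsmin h'' hmm)⟩
      refine mem_verSpace.2 ⟨hBsub hB', ?_⟩
      intro w hw
      rw [Finset.mem_singleton] at hw
      subst hw
      rw [ha]
      exact hz
    rw [hC] at hm
    exact hne (Finset.mem_singleton.1 hm)
  · have hne : (Cand (fun h' _ _ => g h') Hc h0 z).Nonempty := by
      unfold Cand
      apply argminSet_nonempty
      refine ⟨hstar, mem_verSpace.2 ⟨hBsub hsB, ?_⟩⟩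
      intro w hw
      rw [Finset.mem_singleton] at hw
      subst hw
      exact hz
    obtain ⟨h'', hm⟩ := hne
    exact hrec h'' hm

theorem rtd_aux (B : Finset (X → Bool)) (k : ℕ)
    (hcore : ∀ h ∈ B, ∀ T : Finset X, T.card ≤ k →
      ∃ h' ∈ B, (∀ x ∈ T, h' x = h x) ∧ h' ≠ h) :
    ∀ L : List (X → Bool), B ⊆ L.toFinset → B.Nonempty →
      ¬ (∀ (i : ℕ) (hi : i < L.length), ∃ T : Finset X, T.card ≤ k ∧
          IsTeachingSet (L.drop i).toFinset (L.get ⟨i, hi⟩) T) := by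
  intro L
  induction L with
  | nil =>
    intro hsub hne _
    obtain ⟨b, hb⟩ := hne
    simpa using hsub hb
  | cons a L ih =>
    intro hsub hne hts
    by_cases haB : a ∈ B
    · obtain ⟨T, hTc, hTS⟩ := hts 0 (Nat.succ_pos _)
      obtain ⟨h', hB', hagree, hne'⟩ := hcore a haB T hTc
      exact hne' (hTS h' (hsub hB') hagree)
    · refine ih ?_ hne ?_
      · intro b hb
        have hmem := hsub hb
        rw [List.toFinset_cons, Finset.mem_insert] at hmem
        rcases hmem with rfl | hmem
        · exact absurd hb haB
        · exact hmem
      · intro i hi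
        exact hts (i+1) (Nat.succ_lt_succ hi)

theorem rtd_lower (Hc B : Finset (X → Bool)) (k : ℕ) (hBsub : B ⊆ Hc) (hBne : B.Nonempty)
    (hcore : ∀ h ∈ B, ∀ T : Finset X, T.card ≤ k →
      ∃ h' ∈ B, (∀ x ∈ T, h' x = h x) ∧ h' ≠ h) :
    ¬ RTDwitness Hc k := by
  rintro ⟨L, -, htf, hts⟩
  exact rtd_aux B k hcore L (htf ▸ hBsub) hBne hts

theorem RTDwitness_mono {Hc : Finset (X → Bool)} {k k' : ℕ} (hkk : k ≤ k')
    (h : RTDwitness Hc k) : RTDwitness Hc k' := by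
  obtain ⟨L, h1, h2, h3⟩ := h
  exact ⟨L, h1, h2, fun i hi => (h3 i hi).imp fun T hT => ⟨le_trans hT.1 hkk, hT.2⟩⟩

end Aux

/-! ### The concrete class -/

def myL : List (Fin 3 → Bool) :=
  [![false,false,true], ![false,false,false], ![false,true,false], ![false,true,true],
    ![true,false,false]]

def myHc : Finset (Fin 3 → Bool) := myL.toFinset

def myB : Finset (Fin 3 → Bool) :=
  [![false,false,true], ![false,false,false], ![false,true,false], ![false,true,true]].toFinset

def myT : (Fin 3 → Bool) → Fin 3 := fun h =>
  if h 0 then 0 else if h 1 then (if h 2 then 1 else 2) else (if h 2 then 2 else 1)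

def myRank : (Fin 3 → Bool) → ℕ := fun h =>
  if h 0 then 0 else if h 1 then (if h 2 then 1 else 2) else (if h 2 then 4 else 3)

def h000 : Fin 3 → Bool := ![false,false,false]
/-- there is a class with `Σ_const-TD = 3`, `Σ_global-TD = 2`,
`Σ_gvs-TD = 1` (equivalently `TD = 3`, `RTD = 2`, `NCTD = 1`). -/
theorem exists_class_3_2_1 :
    ∃ (X : Type) (_ : Fintype X) (Hc : Finset (X → Bool)) (h0 : X → Bool),
      h0 ∈ Hc ∧
      famTD Hc h0 (SigmaConst Hc) = 3 ∧
      famTD Hc h0 (SigmaGlobal Hc) = 2 ∧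
      famTD Hc h0 (SigmaGVS Hc) = 1 ∧
      TDclassic Hc = 3 ∧ RTD Hc = 2 ∧ NCTD Hc = 1 := by
  refine ⟨Fin 3, inferInstance, myHc, h000, by decide, ?_, ?_, ?_, ?_, ?_, ?_⟩
  · -- famTD SigmaConst = 3
    have hfull : ∀ hs ∈ myHc, ∃ x1 x2 x3 : Fin 3, ∀ h' ∈ myHc,
        h' x1 = hs x1 → h' x2 = hs x2 → h' x3 = hs x3 → h' = hs := by decide
    have hlow : ∀ x1 x2 : Fin 3, ∃ h' ∈ myHc,
        h' x1 = h000 x1 ∧ h' x2 = h000 x2 ∧ h' ≠ h000 := by decide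
    obtain ⟨σ, hσF, hσD⟩ := const_upper myHc h000 hfull
    apply le_antisymm
    · refine famTD_le hσF ?_
      have := TDpref_le hσD
      simpa using this
    · refine le_famTD fun τ hτ => ?_
      have h1 := const_lower myHc h000 h000 (by decide) hlow hτ
      have h2 := TDpref_ge (by decide : h000 ∈ myHc) h1
      simpa using h2
  · -- famTD SigmaGlobal = 2
    have hord : ∀ hs ∈ myHc, ∃ x1 x2 : Fin 3, ∀ h' ∈ myHc,
        h' x1 = hs x1 → h' x2 = hs x2 → myRank h' ≤ myRank hs → h' = hs := by decide
    have hcore : ∀ h ∈ myB, ∀ x : Fin 3, ∃ h' ∈ myB, h' x = h x ∧ h' ≠ h := by decide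
    obtain ⟨σ, hσF, hσD⟩ := global_upper myHc h000 myRank hord
    apply le_antisymm
    · refine famTD_le hσF ?_
      have := TDpref_le hσD
      simpa using this
    · refine le_famTD fun τ hτ => ?_
      obtain ⟨hstar, hmem, h1⟩ := global_lower myHc h000 myB (by decide)
        ⟨h000, by decide⟩ hcore hτ
      have h2 := TDpref_ge hmem h1
      simpa using h2
  · -- famTD SigmaGVS = 1
    have hnc : ∀ h ∈ myHc, ∀ h' ∈ myHc, h ≠ h' →
        ¬ (h' (myT h) = h (myT h) ∧ h (myT h') = h' (myT h')) := by decide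
    obtain ⟨σ, hσF, hσD⟩ := gvs_upper myHc h000 myT hnc
    apply le_antisymm
    · refine famTD_le hσF ?_
      have := TDpref_le hσD
      simpa using this
    · refine le_famTD fun τ hτ => ?_
      have h2 : ((0+1 : ℕ) : ℕ∞) ≤ TDpref myHc h000 τ :=
        TDpref_ge (by decide : h000 ∈ myHc) Dle_zero
      simpa using h2
  · -- TDclassic = 3
    have hts3 : ∀ h ∈ myHc, ∃ T : Finset (Fin 3), T.card = 3 ∧ IsTeachingSet myHc h T := by
      unfold IsTeachingSet; decide
    have htdlow : ∀ T : Finset (Fin 3), T.card ≤ 2 →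
        ∃ h' ∈ myHc, (∀ x ∈ T, h' x = h000 x) ∧ h' ≠ h000 := by decide
    unfold TDclassic
    apply le_antisymm
    · apply Finset.sup_le
      intro h hmem
      unfold minTSsize
      exact Nat.sInf_le (show _ ∈ {k | ∃ T : Finset (Fin 3), T.card = k ∧ IsTeachingSet myHc h T}
        from hts3 h hmem)
    · have h3 : 3 ≤ minTSsize myHc h000 := by
        unfold minTSsize
        have hm3 : (3:ℕ) ∈ {k | ∃ T : Finset (Fin 3), T.card = k ∧ IsTeachingSet myHc h000 T} :=
          hts3 h000 (by decide)
        apply le_csInf ⟨3, hm3⟩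
        rintro k ⟨T, hTc, hTS⟩
        by_contra hlt
        obtain ⟨h', hm, hag, hne⟩ := htdlow T (by omega)
        exact hne (hTS h' hm hag)
      exact le_trans h3 (Finset.le_sup (by decide : h000 ∈ myHc))
  · -- RTD = 2
    have hts_dec : ∀ (i : ℕ) (hi : i < myL.length), ∃ T : Finset (Fin 3), T.card ≤ 2 ∧
        ∀ h' ∈ myL.drop i, (∀ x ∈ T, h' x = myL.get ⟨i, hi⟩ x) → h' = myL.get ⟨i, hi⟩ := by
      decide
    have hwit : RTDwitness myHc 2 := by
      refine ⟨myL, by decide, ?_, ?_⟩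
      · ext a
        simp [myHc, List.mem_toFinset]
      · intro i hi
        obtain ⟨T, hc, hts⟩ := hts_dec i hi
        refine ⟨T, hc, ?_⟩
        intro h' hm ha
        exact hts h'
          ((@List.mem_toFinset _ (fun a b => Classical.propDecidable (a = b)) _ _).mp hm) ha
    have hcore : ∀ h ∈ myB, ∀ T : Finset (Fin 3), T.card ≤ 1 →
        ∃ h' ∈ myB, (∀ x ∈ T, h' x = h x) ∧ h' ≠ h := by decide
    have hw2 : (2:ℕ) ∈ {k | RTDwitness myHc k} := hwit
    unfold RTD
    apply le_antisymm
    · exact Nat.sInf_le hw2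
    · apply le_csInf ⟨2, hw2⟩
      rintro k hk
      by_contra hlt
      have h1 : RTDwitness myHc 1 := RTDwitness_mono (by omega) hk
      exact rtd_lower myHc myB 1 (by decide) ⟨h000, by decide⟩ hcore h1
  · -- NCTD = 1
    have hnc : NonClashing myHc (fun h => {myT h}) := by
      unfold NonClashing; decide
    have hmem1 : (1 : ℕ) ∈ {k | ∃ T : (Fin 3 → Bool) → Finset (Fin 3),
        NonClashing myHc T ∧ ∀ h ∈ myHc, (T h).card ≤ k} :=
      ⟨fun h => {myT h}, hnc, fun h _ => by simp⟩
    unfold NCTD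
    apply le_antisymm
    · exact Nat.sInf_le hmem1
    · apply le_csInf ⟨1, hmem1⟩
      rintro k ⟨T, hncT, hcard⟩
      by_contra hlt
      have hk0 : k = 0 := by omega
      subst hk0
      have hT1 : T h000 = ∅ :=
        Finset.card_eq_zero.1 (Nat.le_zero.1 (hcard h000 (by decide)))
      have hT2 : T ![false,false,true] = ∅ :=
        Finset.card_eq_zero.1 (Nat.le_zero.1 (hcard ![false,false,true] (by decide)))
      refine hncT h000 (by decide) ![false,false,true] (by decide) (by decide) ⟨?_, ?_⟩
      · intro x hx
        rw [hT1] at hx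
        exact absurd hx (Finset.notMem_empty x)
      · intro x hx
        rw [hT2] at hx
        exact absurd hx (Finset.notMem_empty x)
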